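/- arXiv:2202.03075 — 2 statements merged into one kernel-verified Lean document; each statement's English description precedes it below -/
import Mathlib

section
/- A sofic shift X is irreducible if and only if its minimal right-resolving presentation 𝒢 is irreducible (i.e., the underlying directed graph is strongly connected, equivalently the adjacency matrix A_𝒢 is irreducible). -/
open Filter Topology

/-- The (left) shift map on bi-infinite sequences. -/
def shift {A : Type*} (x : ℤ → A) : ℤ → A := fun k => x (k + 1)

/-- The word `w` occurs in the sequence `x` starting at coordinate `k`. -/
def occursAt {A : Type*} (w : List A) (x : ℤ → A) (k : ℤ) : Prop :=
  ∀ i : Fin w.length, x (k + (i : ℤ)) = w.get i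

/-- `w` is a word of the shift space `X`. -/
def isWordOf {A : Type*} (X : Set (ℤ → A)) (w : List A) : Prop :=
  ∃ x ∈ X, ∃ k : ℤ, occursAt w x k

/-- `X` is irreducible: any two words of `X` can be joined by some word. -/
def IrreducibleShift {A : Type*} (X : Set (ℤ → A)) : Prop :=
  ∀ u v : List A, isWordOf X u → isWordOf X v → ∃ w : List A, isWordOf X (u ++ w ++ v)

/-- The number of words of length `n` in `X`. -/
noncomputable def wordCount {A : Type*} (X : Set (ℤ → A)) (n : ℕ) : ℕ :=
  Set.ncard {w : List A | w.length = n ∧ isWordOf X w}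

/-- `X` has topological entropy `h`, i.e. `(1/n) log |B_n(X)| → h`. -/
def HasEntropy {A : Type*} (X : Set (ℤ → A)) (h : ℝ) : Prop :=
  Tendsto (fun n : ℕ => Real.log (wordCount X n) / n) atTop (𝓝 h)

/-- A right-resolving labelled graph on vertex set `Fin S`: for each vertex and each
label there is at most one outgoing edge with that label, recorded by the partial
transition map `δ`. -/
structure RRGraph (A : Type*) where
  S : ℕ
  δ : Fin S → A → Option (Fin S)

namespace RRGraph

variable {A : Type*} (G : RRGraph A)

/-- Every vertex has an outgoing and an incoming edge (neither a source nor a sink). -/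
def Essential : Prop :=
  ∀ v : Fin G.S, (∃ a w, G.δ v a = some w) ∧ (∃ u a, G.δ u a = some v)

/-- The sofic shift presented by `G`: labels of bi-infinite paths. -/
def lang : Set (ℤ → A) :=
  {x | ∃ π : ℤ → Fin G.S, ∀ k : ℤ, G.δ (π k) (x k) = some (π (k + 1))}

/-- `G` is a presentation of `X`. -/
def presents (X : Set (ℤ → A)) : Prop := X = G.lang

/-- The terminal vertex (if any) of the path starting at `v` labelled by the word `w`. -/
def run (v : Fin G.S) (w : List A) : Option (Fin G.S) :=
  w.foldl (fun o a => o.bind fun u => G.δ u a) (some v)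

/-- The word `w` is synchronising in `G`: all paths labelled `w` end at the same vertex. -/
def Synchronising (w : List A) : Prop :=
  ∃ t : Fin G.S, ∀ v u : Fin G.S, G.run v w = some u → u = t

/-- The adjacency matrix of the underlying graph of `G`. -/
def adj [Fintype A] : Matrix (Fin G.S) (Fin G.S) ℕ :=
  fun u v => (Finset.univ.filter fun a : A => G.δ u a = some v).card

end RRGraph

/-- `X` is a sofic shift: it is presented by some (right-resolving) labelled graph. -/
def IsSofic {A : Type*} (X : Set (ℤ → A)) : Prop := ∃ G : RRGraph A, G.presents X

/-- `G` is a minimal right-resolving presentation of `X`: an essential right-resolving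
presentation with the fewest vertices among all right-resolving presentations. -/
def IsMinRR {A : Type*} (G : RRGraph A) (X : Set (ℤ → A)) : Prop :=
  G.presents X ∧ G.Essential ∧ ∀ G' : RRGraph A, G'.presents X → G.S ≤ G'.S

/-- A nonnegative matrix is irreducible. -/
def MatIrred {n : ℕ} (M : Matrix (Fin n) (Fin n) ℕ) : Prop :=
  ∀ i j : Fin n, ∃ k : ℕ, 0 < k ∧ 0 < (M ^ k) i j

/-- `p` is the period of the irreducible matrix `M` (computed at the index `i`):
`p` is a gcd of the set `{k > 0 | (M^k) i i > 0}`. -/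
def IsMatPeriod {n : ℕ} (M : Matrix (Fin n) (Fin n) ℕ) (i : Fin n) (p : ℕ) : Prop :=
  (∀ k : ℕ, 0 < k → 0 < (M ^ k) i i → p ∣ k) ∧
    ∀ q : ℕ, (∀ k : ℕ, 0 < k → 0 < (M ^ k) i i → q ∣ k) → q ∣ p

/-- The spectral radius of a complex matrix: the supremum of the moduli of the roots of
its characteristic polynomial (i.e. of its eigenvalues). -/
noncomputable def specRad {ι : Type*} [Fintype ι] [DecidableEq ι] (M : Matrix ι ι ℂ) : ℝ :=
  sSup ((fun z : ℂ => ‖z‖) '' {μ : ℂ | M.charpoly.IsRoot μ})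

/-- Points of `X` that are periodic with (not necessarily prime) period `n`. -/
def periodicIn {A : Type*} (X : Set (ℤ → A)) (n : ℕ) : Set (ℤ → A) :=
  {x | x ∈ X ∧ shift^[n] x = x}

/-- Points of `X` with prime period `n`. -/
def primePeriodicIn {A : Type*} (X : Set (ℤ → A)) (n : ℕ) : Set (ℤ → A) :=
  {x | x ∈ X ∧ shift^[n] x = x ∧ ∀ k : ℕ, 0 < k → k < n → shift^[k] x ≠ x}

/-- The number of closed orbits of length `n` in `X`. -/
noncomputable def orbitCount {A : Type*} (X : Set (ℤ → A)) (n : ℕ) : ℕ :=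
  Set.ncard (primePeriodicIn X n) / n

/-- The prime orbit counting function `π_σ(N)` of `X`. -/
noncomputable def piCount {A : Type*} (X : Set (ℤ → A)) (N : ℕ) : ℕ :=
  ∑ n ∈ Finset.Icc 1 N, orbitCount X n

section Aux1
variable {A : Type*}

lemma occursAt_append_left {u v : List A} {x : ℤ → A} {k : ℤ}
    (h : occursAt (u ++ v) x k) : occursAt u x k := by
  intro i
  have hi : (i : ℕ) < (u ++ v).length := by simp; omega
  have := h ⟨i, hi⟩
  simpa [List.get_eq_getElem, List.getElem_append_left] using this

lemma occursAt_append_right {u v : List A} {x : ℤ → A} {k : ℤ}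
    (h : occursAt (u ++ v) x k) : occursAt v x (k + u.length) := by
  intro i
  have hi : u.length + (i : ℕ) < (u ++ v).length := by simp
  have h2 := h ⟨u.length + i, hi⟩
  have e1 : (k + ((u.length + (i:ℕ) : ℕ) : ℤ)) = k + (u.length : ℤ) + (i:ℤ) := by
    push_cast; ring
  rw [List.get_eq_getElem] at h2 ⊢
  simp only [Fin.val_mk] at h2
  rw [e1] at h2
  rw [h2]
  rw [List.getElem_append_right (by omega)]
  congr 1
  omega

lemma isWordOf_ofFn {X : Set (ℤ → A)} {x : ℤ → A} (hx : x ∈ X) (k : ℤ) (n : ℕ) :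
    isWordOf X (List.ofFn fun i : Fin n => x (k + (i : ℤ))) := by
  refine ⟨x, hx, k, fun i => ?_⟩
  rw [List.get_ofFn]
  simp

def isPath (G : RRGraph A) (ρ : ℕ → Fin G.S) (w : List A) : Prop :=
  ∀ i : ℕ, ∀ h : i < w.length, G.δ (ρ i) (w[i]) = some (ρ (i+1))

lemma adj_pos_iff [Fintype A] (G : RRGraph A) (u v : Fin G.S) :
    0 < G.adj u v ↔ ∃ a, G.δ u a = some v := by
  unfold RRGraph.adj
  rw [Finset.card_pos, Finset.filter_nonempty_iff]
  simp

lemma adjpow_pos_iff [Fintype A] (G : RRGraph A) (k : ℕ) (i j : Fin G.S) :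
    0 < (G.adj ^ k) i j ↔
      ∃ (w : List A) (ρ : ℕ → Fin G.S), w.length = k ∧ ρ 0 = i ∧ ρ k = j ∧ isPath G ρ w := by
  induction k generalizing j with
  | zero =>
    simp only [pow_zero, Matrix.one_apply]
    constructor
    · intro h
      have hij : i = j := by by_contra hne; simp [hne] at h
      exact ⟨[], fun _ => i, rfl, rfl, hij ▸ rfl, fun i h => by simp at h⟩
    · rintro ⟨w, ρ, hw, h0, hk, _⟩
      have : i = j := by rw [← h0, ← hk]
      simp [this]
  | succ k ih =>
    rw [pow_succ, Matrix.mul_apply]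
    constructor
    · intro h
      have hex : ∃ u, 0 < (G.adj ^ k) i u * G.adj u j := by
        by_contra hc
        push_neg at hc
        have : ∑ u, (G.adj ^ k) i u * G.adj u j = 0 :=
          Finset.sum_eq_zero fun u _ => by have := hc u; omega
        omega
      obtain ⟨u, hu⟩ := hex
      have h1 : 0 < (G.adj ^ k) i u := by
        rcases Nat.eq_zero_or_pos ((G.adj ^ k) i u) with h'|h'
        · rw [h'] at hu; simp at hu
        · exact h'
      have h2 : 0 < G.adj u j := by
        rcases Nat.eq_zero_or_pos (G.adj u j) with h'|h'
        · rw [h'] at hu; simp at hu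
        · exact h'
      obtain ⟨w, ρ, hw, h0, hk, hp⟩ := (ih u).mp h1
      obtain ⟨a, ha⟩ := (adj_pos_iff G u j).mp h2
      refine ⟨w ++ [a], fun n => if n = k + 1 then j else ρ n, by simp [hw], by simp [h0], by simp, ?_⟩
      intro m hm
      simp only [List.length_append, List.length_cons, List.length_nil, hw] at hm
      rcases Nat.lt_or_ge m k with hmk | hmk
      · have : (w ++ [a])[m] = w[m]'(by omega) := List.getElem_append_left (by omega)
        rw [this]
        have hne1 : m ≠ k + 1 := by omega
        have hne2 : m + 1 ≠ k + 1 := by omega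
        have e1 : (if m = k + 1 then j else ρ m) = ρ m := by simp [hne1]
        have e2 : (if m + 1 = k + 1 then j else ρ (m+1)) = ρ (m+1) := if_neg hne2
        simp only [e1, e2]
        exact hp m (by omega)
      · have hmk' : m = k := by omega
        subst hmk'
        have : (w ++ [a])[m] = a := by
          rw [List.getElem_append_right (by omega)]
          simp [hw]
        rw [this]
        have e1 : (if m = m + 1 then j else ρ m) = ρ m := by simp
        simp only [e1, if_pos rfl]
        rw [← hk] at ha
        rw [ha]
        simp
    · rintro ⟨w, ρ, hw, h0, hk, hp⟩
      have hkw : k < w.length := by omega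
      have hlast := hp k hkw
      have h2 : 0 < G.adj (ρ k) j := by
        rw [adj_pos_iff]
        exact ⟨w[k], by rw [hlast, hk]⟩
      have h1 : 0 < (G.adj ^ k) i (ρ k) := by
        rw [ih]
        refine ⟨w.take k, ρ, by simp [hw], h0, rfl, ?_⟩
        intro m hm
        simp only [List.length_take] at hm
        have hm' : m < k := by omega
        have : (w.take k)[m] = w[m]'(by omega) := List.getElem_take ..
        rw [this]
        exact hp m (by omega)
      calc 0 < (G.adj ^ k) i (ρ k) * G.adj (ρ k) j := Nat.mul_pos h1 h2
        _ ≤ ∑ u, (G.adj ^ k) i u * G.adj u j :=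
          Finset.single_le_sum (f := fun u => (G.adj ^ k) i u * G.adj u j) (fun u _ => Nat.zero_le _) (Finset.mem_univ _)

lemma koenig {V : Type*} [Finite V] [Nonempty V] (C : ℕ → Set (ℤ → V))
    (hd : ∀ n, C (n+1) ⊆ C n) (hn : ∀ n, (C n).Nonempty)
    (hW : ∀ n, ∃ s : Finset ℤ, ∀ p q : ℤ → V, (∀ k ∈ s, p k = q k) → p ∈ C n → q ∈ C n) :
    (⋂ n, C n).Nonempty := by
  letI : TopologicalSpace V := ⊥
  haveI : DiscreteTopology V := ⟨rfl⟩
  have hcl : ∀ n, IsClosed (C n) := by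
    intro n
    obtain ⟨s, hs⟩ := hW n
    rw [← isOpen_compl_iff, isOpen_iff_forall_mem_open]
    intro q hq
    refine ⟨{p | ∀ k ∈ s, p k = q k}, fun p hp hpC => hq (hs p q hp hpC), ?_, fun k _ => rfl⟩
    have hrw : {p : ℤ → V | ∀ k ∈ s, p k = q k} = ⋂ k ∈ s, (fun p : ℤ → V => p k) ⁻¹' {q k} := by
      ext p; simp
    rw [hrw]
    exact isOpen_biInter_finset fun k _ =>
      (continuous_apply k).isOpen_preimage _ (isOpen_discrete _)
  exact IsCompact.nonempty_iInter_of_sequence_nonempty_isCompact_isClosed C hd hn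
    ((hcl 0).isCompact) hcl

end Aux1

lemma matIrred_to_irreducible [Fintype A] {X : Set (ℤ → A)} {G : RRGraph A}
    (hpres : X = G.lang) (hirr : MatIrred G.adj) : IrreducibleShift X := by
  intro u v hu hv
  obtain ⟨x, hxX, k, hocc⟩ := hu
  obtain ⟨y, hyX, l, hocc'⟩ := hv
  rw [hpres] at hxX hyX
  obtain ⟨π, hπ⟩ := hxX
  obtain ⟨ρ, hρ⟩ := hyX
  obtain ⟨m, hm, hpos⟩ := hirr (π (k + u.length)) (ρ l)
  obtain ⟨w, τ, hwlen, hτ0, hτm, hτpath⟩ := (adjpow_pos_iff G m _ _).mp hpos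
  set B : ℤ := k + u.length with hB
  set E : ℤ := B + m with hE
  have hBE : B < E := by omega
  set z : ℤ → A := fun t =>
    if t < B then x t else if t < E then w.getD (t - B).toNat (x 0) else y (t - E + l) with hz
  set σ : ℤ → Fin G.S := fun t =>
    if t < B then π t else if t < E then τ (t - B).toNat else ρ (t - E + l) with hσ
  have hσB : ∀ t : ℤ, t ≤ B → σ t = π t := by
    intro t ht
    rcases lt_or_eq_of_le ht with h | h
    · simp [hσ, h]
    · subst h
      simp only [hσ, lt_irrefl, if_false, if_pos hBE]
      simp only [sub_self, Int.toNat_zero, hτ0]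
  have hσE : ∀ t : ℤ, E ≤ t → σ t = ρ (t - E + l) := by
    intro t ht
    simp [hσ, not_lt.mpr ht, not_lt.mpr (le_trans (le_of_lt hBE) ht)]
  have hσmid : ∀ t : ℤ, B ≤ t → t < E → σ t = τ (t - B).toNat := by
    intro t h1 h2
    rcases lt_or_eq_of_le h1 with h | h
    · simp [hσ, not_lt.mpr (le_of_lt h), h2]
    · subst h; simp [hσ, h2, hτ0]
  have hpath : ∀ t : ℤ, G.δ (σ t) (z t) = some (σ (t + 1)) := by
    intro t
    rcases lt_or_ge t B with hlt | hge
    · have h1 : σ t = π t := hσB t (le_of_lt hlt)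
      have h2 : z t = x t := by simp [hz, hlt]
      have h3 : σ (t + 1) = π (t + 1) := hσB (t + 1) (by omega)
      rw [h1, h2, h3]; exact hπ t
    · rcases lt_or_ge t E with hltE | hgeE
      · set n : ℕ := (t - B).toNat with hn
        have hnm : n < w.length := by omega
        have h1 : σ t = τ n := hσmid t hge hltE
        have h2 : z t = w[n] := by
          simp only [hz, not_lt.mpr hge, if_false, if_pos hltE, ← hn]
          exact List.getD_eq_getElem _ _ hnm
        have h3 : σ (t + 1) = τ (n + 1) := by
          rcases lt_or_ge (t + 1) E with h | h
          · rw [hσmid (t + 1) (by omega) h]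
            congr 1
            omega
          · have ht1 : t + 1 = E := by omega
            have hnm' : n + 1 = m := by omega
            rw [hσE (t + 1) h, hnm', hτm, ht1]
            norm_num
        rw [h1, h2, h3]
        exact hτpath n hnm
      · have h1 : σ t = ρ (t - E + l) := hσE t hgeE
        have h2 : z t = y (t - E + l) := by
          simp [hz, not_lt.mpr (le_trans (le_of_lt hBE) hgeE), not_lt.mpr hgeE]
        have h3 : σ (t + 1) = ρ (t - E + l + 1) := by
          rw [hσE (t + 1) (by omega)]
          congr 1
          ring
        rw [h1, h2, h3]
        exact hρ (t - E + l)
  refine ⟨w, z, by rw [hpres]; exact ⟨σ, hpath⟩, k, ?_⟩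
  intro i
  set n : ℕ := (i : ℕ) with hni
  have hlen : n < u.length + w.length + v.length := by
    have := i.isLt
    simp [List.length_append] at this
    omega
  rw [List.get_eq_getElem]
  show z (k + (n : ℤ)) = (u ++ w ++ v)[n]'(i.isLt)
  rcases lt_or_ge n u.length with h1 | h1
  · have hzz : z (k + n) = x (k + n) := by
      have : (k : ℤ) + n < B := by omega
      simp [hz, this]
    have hocc1 := hocc ⟨n, h1⟩
    rw [List.get_eq_getElem] at hocc1
    simp only [Fin.val_mk] at hocc1
    rw [hzz, hocc1]
    rw [List.getElem_append_left (by simp [List.length_append]; omega),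
        List.getElem_append_left h1]
  · rcases lt_or_ge n (u.length + w.length) with h2 | h2
    · have hb1 : ¬ ((k : ℤ) + n < B) := by omega
      have hb2 : (k : ℤ) + n < E := by omega
      have htn : ((k + (n:ℤ)) - B).toNat = n - u.length := by omega
      have hnw : n - u.length < w.length := by omega
      have hzz : z (k + n) = w[n - u.length] := by
        simp only [hz, hb1, if_false, if_pos hb2, htn]
        exact List.getD_eq_getElem _ _ hnw
      rw [hzz]
      rw [List.getElem_append_left (by simp [List.length_append]; omega),
          List.getElem_append_right h1]
    · have hb1 : ¬ ((k : ℤ) + n < B) := by omega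
      have hb2 : ¬ ((k : ℤ) + n < E) := by omega
      have hiv : n - (u.length + w.length) < v.length := by omega
      have hzz : z (k + n) = y ((k + (n:ℤ)) - E + l) := by
        simp [hz, hb1, hb2]
      have hocc2 := hocc' ⟨n - (u.length + w.length), hiv⟩
      rw [List.get_eq_getElem] at hocc2
      simp only [Fin.val_mk] at hocc2
      have harg : (k + (n:ℤ)) - E + l = l + ((n - (u.length + w.length) : ℕ) : ℤ) := by
        push_cast
        omega
      rw [hzz, harg, hocc2]
      rw [List.getElem_append_right (by simp [List.length_append]; omega)]
      congr 1
      simp [List.length_append]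

lemma freq_pigeonhole {τ : Type*} [Finite τ] {Q : ℕ → Prop}
    (h : ∀ N, ∃ k, N ≤ k ∧ Q k) (F : ℕ → τ) :
    ∃ t, ∀ N, ∃ k, N ≤ k ∧ Q k ∧ F k = t := by
  choose k hk hQ using h
  obtain ⟨t, ht⟩ := Finite.exists_infinite_fiber (F ∘ k)
  have ht' : ((F ∘ k) ⁻¹' {t}).Infinite := Set.infinite_coe_iff.mp ht
  refine ⟨t, fun N => ?_⟩
  obtain ⟨M, hM1, hM2⟩ := Set.Infinite.exists_gt ht' N
  exact ⟨k M, le_trans (le_of_lt hM2) (hk M), hQ M, hM1⟩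

lemma chain_words {X : Set (ℤ → A)} (hirr : IrreducibleShift X)
    (g : ℕ → List A) (hg : ∀ n, isWordOf X (g n)) :
    ∃ u : ℕ → List A, u 0 = g 0 ∧ (∀ n, isWordOf X (u n)) ∧
      (∀ n, ∃ t, u (n+1) = u n ++ (t ++ g (n+1))) := by
  let u : ℕ → {w : List A // isWordOf X w} := fun n =>
    Nat.rec ⟨g 0, hg 0⟩ (fun n p =>
      ⟨p.1 ++ Classical.choose (hirr p.1 (g (n+1)) p.2 (hg (n+1))) ++ g (n+1),
        Classical.choose_spec (hirr p.1 (g (n+1)) p.2 (hg (n+1)))⟩) n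
  refine ⟨fun n => (u n).1, rfl, fun n => (u n).2, fun n => ?_⟩
  exact ⟨Classical.choose (hirr (u n).1 (g (n+1)) (u n).2 (hg (n+1))), by
    show ((u n).1 ++ _ ++ g (n+1) : List A) = _
    rw [List.append_assoc]⟩

lemma L1aux {A : Type*} {G : RRGraph A} {ξ : ℤ → A} {π : ℤ → Fin G.S}
    (hvalid : ∀ n : ℕ, G.δ (π (n : ℤ)) (ξ (n : ℤ)) = some (π ((n + 1 : ℕ) : ℤ)))
    (w : List A)
    (hkw : ∀ N : ℕ, ∃ k : ℕ, N ≤ k ∧ ∀ i : ℕ, (h : i < w.length) → ξ ((k + i : ℕ) : ℤ) = w[i]) :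
    ∃ ρ : ℕ → Fin G.S, ∀ i : ℕ, ∀ h : i < w.length,
      (∀ N : ℕ, ∃ k : ℕ, N ≤ k ∧ π (k : ℤ) = ρ i ∧ ξ (k : ℤ) = w[i]) ∧
        G.δ (ρ i) (w[i]) = some (ρ (i+1)) := by
  haveI : Nonempty (Fin G.S) := ⟨π 0⟩
  obtain ⟨t, htspec⟩ := freq_pigeonhole
    (Q := fun k => ∀ i : ℕ, (h : i < w.length) → ξ ((k + i : ℕ) : ℤ) = w[i])
    hkw (fun k => fun i : Fin (w.length + 1) => π ((k + (i : ℕ) : ℕ) : ℤ))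
  refine ⟨fun i => t ⟨min i w.length, by omega⟩, ?_⟩
  intro i hi
  have hv1 : (⟨min i w.length, by omega⟩ : Fin (w.length + 1)) = ⟨i, by omega⟩ := by
    ext; simp; omega
  have hv2 : (⟨min (i+1) w.length, by omega⟩ : Fin (w.length + 1)) = ⟨i+1, by omega⟩ := by
    ext; simp; omega
  constructor
  · intro N
    obtain ⟨k, hk1, hQ, hF⟩ := htspec N
    refine ⟨k + i, by omega, ?_, hQ i hi⟩
    have hc := congrFun hF (⟨i, by omega⟩ : Fin (w.length + 1))
    simp only at hc
    beta_reduce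
    exact hc.trans (congrArg t hv1.symm)
  · obtain ⟨k, hk1, hQ, hF⟩ := htspec 0
    have hstep := hvalid (k + i)
    have hπi := congrFun hF (⟨i, by omega⟩ : Fin (w.length + 1))
    have hπi1 := congrFun hF (⟨i + 1, by omega⟩ : Fin (w.length + 1))
    simp only at hπi hπi1
    have hassoc : k + i + 1 = k + (i + 1) := by omega
    rw [hassoc] at hstep
    have e1 : π ((k + i : ℕ) : ℤ) = t ⟨min i w.length, by omega⟩ :=
      hπi.trans (congrArg t hv1.symm)
    have e3 : π ((k + (i+1) : ℕ) : ℤ) = t ⟨min (i+1) w.length, by omega⟩ :=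
      hπi1.trans (congrArg t hv2.symm)
    simp only [e1, e3, hQ i hi] at hstep
    beta_reduce
    exact hstep

set_option maxHeartbeats 1000000 in
lemma irreducible_to_matIrred [Fintype A] {X : Set (ℤ → A)} {G : RRGraph A}
    (hpres : X = G.lang)
    (hmin : ∀ G' : RRGraph A, G'.presents X → G.S ≤ G'.S)
    (hXne : X.Nonempty) (hirr : IrreducibleShift X) : MatIrred G.adj := by
  classical
  obtain ⟨x0, hx0⟩ := hXne
  have hx0' : x0 ∈ G.lang := hpres ▸ hx0
  obtain ⟨π0, hπ0⟩ := hx0'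
  haveI : Nonempty (Fin G.S) := ⟨π0 0⟩
  haveI : Nonempty A := ⟨x0 0⟩
  -- enumeration of the words of X, each hit at arbitrarily large indices
  have hcword : {w : List A | isWordOf X w}.Countable := Set.to_countable _
  have hwne : {w : List A | isWordOf X w}.Nonempty :=
    ⟨[], x0, hx0, 0, fun i => absurd i.isLt (by simp)⟩
  obtain ⟨f, hf⟩ := Set.Countable.exists_eq_range hcword hwne
  have hfword : ∀ n, isWordOf X (f n) := fun n => by
    have : f n ∈ Set.range f := ⟨n, rfl⟩
    rw [← hf] at this
    exact this
  set e : ℕ → List A := fun n => f (Nat.unpair n).1 with he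
  have heword : ∀ n, isWordOf X (e n) := fun n => hfword _
  have hehit : ∀ w, isWordOf X w → ∀ N, ∃ n, N ≤ n ∧ e n = w := by
    intro w hw N
    have hmem : w ∈ Set.range f := by rw [← hf]; exact hw
    obtain ⟨m, hm⟩ := hmem
    refine ⟨Nat.pair m N, Nat.right_le_pair m N, ?_⟩
    simp [he, Nat.unpair_pair, hm]
  -- padded enumeration
  set vw : ℕ → List A := fun n => List.ofFn (fun i : Fin n => x0 (0 + (i : ℤ))) with hvw
  have hvlen : ∀ n, (vw n).length = n := fun n => by simp [hvw]
  have hvword : ∀ n, isWordOf X (vw n) := fun n => isWordOf_ofFn hx0 0 n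
  have hgex : ∀ n, ∃ gwn : List A, isWordOf X gwn ∧ ∃ q, gwn = q ++ e n ∧ n ≤ q.length := by
    intro n
    obtain ⟨c, hc⟩ := hirr (vw n) (e n) (hvword n) (heword n)
    refine ⟨vw n ++ c ++ e n, hc, vw n ++ c, by rw [List.append_assoc], ?_⟩
    simp [hvlen]
  choose gw hgwword hgwsuf using hgex
  obtain ⟨u, hu0, huword, hustep⟩ := chain_words hirr gw hgwword
  -- suffix structure of u n
  have husuf : ∀ n, ∃ q, u n = q ++ e n ∧ n ≤ q.length := by
    intro n
    cases n with
    | zero => rw [hu0]; exact hgwsuf 0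
    | succ n =>
      obtain ⟨t, ht⟩ := hustep n
      obtain ⟨q, hq1, hq2⟩ := hgwsuf (n+1)
      refine ⟨u n ++ (t ++ q), ?_, ?_⟩
      · rw [ht, hq1, List.append_assoc, List.append_assoc]
      · simp only [List.length_append]
        omega
  have hulen : ∀ n, n ≤ (u n).length := by
    intro n
    obtain ⟨q, hq1, hq2⟩ := husuf n
    rw [hq1]
    simp only [List.length_append]
    omega
  have huprefstep : ∀ n, ∀ i : ℕ, (h : i < (u n).length) →
      (u (n+1)).length > i ∧ ∀ h2 : i < (u (n+1)).length, (u (n+1))[i] = (u n)[i] := by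
    intro n i h
    obtain ⟨t, ht⟩ := hustep n
    constructor
    · rw [ht]; simp only [List.length_append]; omega
    · intro h2
      simp only [ht]
      exact List.getElem_append_left h
  -- first König application: a one-sided path whose labels contain every u n as prefix
  set C : ℕ → Set (ℤ → A × Fin G.S) := fun n =>
    {p | (∀ t : ℤ, 0 ≤ t → t < ((u n).length : ℤ) → G.δ (p t).2 (p t).1 = some ((p (t+1)).2)) ∧
      ∀ i : ℕ, (h : i < (u n).length) → (p (i : ℤ)).1 = (u n)[i]} with hC
  have hCne : ∀ n, (C n).Nonempty := by
    intro n
    obtain ⟨xw, hxwX, kw, hocc⟩ := huword n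
    obtain ⟨πw, hπw⟩ : xw ∈ G.lang := hpres ▸ hxwX
    refine ⟨fun t => (xw (kw + t), πw (kw + t)), ?_, ?_⟩
    · intro t _ _
      have := hπw (kw + t)
      simpa [add_assoc] using this
    · intro i hi
      have := hocc ⟨i, hi⟩
      rw [List.get_eq_getElem] at this
      simpa using this
  have hCdec : ∀ n, C (n+1) ⊆ C n := by
    intro n p hp
    obtain ⟨h1, h2⟩ := hp
    obtain ⟨t, ht⟩ := hustep n
    have hle : (u n).length ≤ (u (n+1)).length := by rw [ht]; simp
    refine ⟨fun t' ht1 ht2 => h1 t' ht1 (by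
      have : ((u n).length : ℤ) ≤ ((u (n+1)).length : ℤ) := by exact_mod_cast hle
      omega), ?_⟩
    intro i hi
    have h2' := h2 i (lt_of_lt_of_le hi hle)
    rw [h2']
    simp only [ht]
    exact List.getElem_append_left hi
  have hCW : ∀ n, ∃ s : Finset ℤ, ∀ p q : ℤ → A × Fin G.S,
      (∀ k ∈ s, p k = q k) → p ∈ C n → q ∈ C n := by
    intro n
    refine ⟨Finset.Icc 0 ((u n).length : ℤ), fun p q hagree hp => ?_⟩
    obtain ⟨h1, h2⟩ := hp
    constructor
    · intro t' ht1 ht2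
      rw [← hagree t' (by rw [Finset.mem_Icc]; omega),
          ← hagree (t'+1) (by rw [Finset.mem_Icc]; omega)]
      exact h1 t' ht1 ht2
    · intro i hi
      rw [← hagree (i : ℤ) (by rw [Finset.mem_Icc]; omega)]
      exact h2 i hi
  obtain ⟨p, hpmem⟩ := koenig C hCdec hCne hCW
  have hp : ∀ n, p ∈ C n := fun n => Set.mem_iInter.mp hpmem n
  set ξ : ℤ → A := fun t => (p t).1 with hξ
  set π : ℤ → Fin G.S := fun t => (p t).2 with hπ
  have hvalid : ∀ t : ℤ, 0 ≤ t → G.δ (π t) (ξ t) = some (π (t+1)) := by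
    intro t ht
    refine (hp (t.toNat + 2)).1 t ht ?_
    have := hulen (t.toNat + 2)
    omega
  have hlabel : ∀ n, ∀ i : ℕ, (h : i < (u n).length) → ξ (i : ℤ) = (u n)[i] :=
    fun n i h => (hp n).2 i h
  have hkey : ∀ w, isWordOf X w → ∀ N : ℕ, ∃ k : ℕ, N ≤ k ∧
      ∀ i : ℕ, (h : i < w.length) → ξ ((k + i : ℕ) : ℤ) = w[i] := by
    intro w hw N
    obtain ⟨n, hn, hen⟩ := hehit w hw N
    obtain ⟨q, hq1, hq2⟩ := husuf n
    have huw : u n = q ++ w := by rw [hq1, hen]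
    refine ⟨q.length, by omega, ?_⟩
    intro i hi
    have hlt : q.length + i < (u n).length := by
      rw [huw]; simp only [List.length_append]; omega
    have hl := hlabel n (q.length + i) hlt
    rw [hl]
    simp only [huw]
    rw [List.getElem_append_right (by omega)]
    congr 1
    omega
  have hvalidN : ∀ n : ℕ, G.δ (π (n : ℤ)) (ξ (n : ℤ)) = some (π ((n + 1 : ℕ) : ℤ)) := by
    intro n
    have h1 := hvalid (n : ℤ) (Int.natCast_nonneg n)
    have hc : ((n + 1 : ℕ) : ℤ) = (n : ℤ) + 1 := by push_cast; ring
    rw [hc]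
    exact h1
  set H : RRGraph A := ⟨G.S, fun v a =>
    if (∀ N : ℕ, ∃ k : ℕ, N ≤ k ∧ π (k : ℤ) = v ∧ ξ (k : ℤ) = a) then G.δ v a else none⟩ with hH
  set I : Set (Fin G.S) := {v | ∀ N : ℕ, ∃ k : ℕ, N ≤ k ∧ π (k : ℤ) = v} with hI
  have hHδeq : ∀ (v : Fin G.S) (a : A), H.δ v a =
      (if (∀ N : ℕ, ∃ k : ℕ, N ≤ k ∧ π (k : ℤ) = v ∧ ξ (k : ℤ) = a) then G.δ v a
        else none) := fun v a => rfl
  have hHsub : ∀ (v : Fin G.S) (a : A) (u' : Fin G.S), H.δ v a = some u' →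
      G.δ v a = some u' ∧ v ∈ I ∧ u' ∈ I := by
    intro v a u' hva
    rw [hHδeq] at hva
    by_cases hcond : (∀ N : ℕ, ∃ k : ℕ, N ≤ k ∧ π (k : ℤ) = v ∧ ξ (k : ℤ) = a)
    · rw [if_pos hcond] at hva
      refine ⟨hva, fun N => ?_, fun N => ?_⟩
      · obtain ⟨k, hk1, hk2, hk3⟩ := hcond N
        exact ⟨k, hk1, hk2⟩
      · obtain ⟨k, hk1, hk2, hk3⟩ := hcond N
        refine ⟨k + 1, by omega, ?_⟩
        have hstep := hvalidN k
        rw [hk2, hk3, hva] at hstep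
        exact (Option.some.inj hstep).symm
    · rw [if_neg hcond] at hva
      exact nomatch hva
  have hL1 : ∀ w : List A, isWordOf X w → ∃ ρ : ℕ → Fin G.S,
      ∀ i : ℕ, ∀ h : i < w.length,
        (∀ N : ℕ, ∃ k : ℕ, N ≤ k ∧ π (k : ℤ) = ρ i ∧ ξ (k : ℤ) = w[i]) ∧
          G.δ (ρ i) (w[i]) = some (ρ (i+1)) :=
    fun w hw => L1aux hvalidN w (hkey w hw)
  -- the language of H is X
  have hHlangX : X = H.lang := by
    apply Set.Subset.antisymm
    · intro y hy
      have hwin : ∀ n : ℕ, isWordOf X (List.ofFn fun i : Fin (2*n) => y (-(n:ℤ) + (i:ℤ))) :=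
        fun n => isWordOf_ofFn hy (-(n:ℤ)) (2*n)
      have hρ : ∀ n : ℕ, ∃ ρ : ℕ → Fin G.S, ∀ i : ℕ,
          (h : i < 2*n) → H.δ (ρ i) (y (-(n:ℤ) + (i:ℤ))) = some (ρ (i+1)) := by
        intro n
        obtain ⟨ρ, hρ⟩ := hL1 _ (hwin n)
        refine ⟨ρ, fun i hi => ?_⟩
        obtain ⟨hcnd, hδ⟩ := hρ i (by simpa using hi)
        have hg : (List.ofFn fun j : Fin (2*n) => y (-(n:ℤ) + (j:ℤ)))[i]'(by simpa using hi) =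
            y (-(n:ℤ) + (i:ℤ)) := by
          rw [List.getElem_ofFn]
        rw [← hg, hHδeq, if_pos]
        · exact hδ
        · exact hcnd
      choose ρs hρs using hρ
      set C2 : ℕ → Set (ℤ → Fin G.S) := fun n =>
        {q | ∀ t : ℤ, -(n:ℤ) ≤ t → t < (n:ℤ) → H.δ (q t) (y t) = some (q (t+1))} with hC2
      have hC2ne : ∀ n, (C2 n).Nonempty := by
        intro n
        refine ⟨fun t => ρs n (t + n).toNat, ?_⟩
        intro t ht1 ht2
        have hi : (t + n).toNat < 2*n := by omega
        have hstep := hρs n (t + n).toNat hi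
        have harg : -(n:ℤ) + (((t + (n:ℤ)).toNat : ℕ) : ℤ) = t := by omega
        rw [harg] at hstep
        rw [hstep]
        congr 2
        omega
      have hC2dec : ∀ n, C2 (n+1) ⊆ C2 n := by
        intro n q hq t ht1 ht2
        exact hq t (by push_cast; omega) (by push_cast; omega)
      have hC2W : ∀ n, ∃ s : Finset ℤ, ∀ p' q' : ℤ → Fin G.S,
          (∀ k ∈ s, p' k = q' k) → p' ∈ C2 n → q' ∈ C2 n := by
        intro n
        refine ⟨Finset.Icc (-(n:ℤ)) (n:ℤ), fun p' q' hagree hp' t ht1 ht2 => ?_⟩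
        rw [← hagree t (by rw [Finset.mem_Icc]; omega),
            ← hagree (t+1) (by rw [Finset.mem_Icc]; omega)]
        exact hp' t ht1 ht2
      obtain ⟨q, hq⟩ := koenig C2 hC2dec hC2ne hC2W
      refine ⟨q, fun t => ?_⟩
      exact (Set.mem_iInter.mp hq (t.natAbs + 1)) t (by omega) (by omega)
    · intro y hy
      obtain ⟨q, hq⟩ := hy
      rw [hpres]
      exact ⟨q, fun t => (hHsub _ _ _ (hq t)).1⟩
  -- quotient to the recurrent vertex set
  have hcardeq : Nat.card I = Set.ncard I := Nat.card_coe_set_eq I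
  have e2 : ↥I ≃ Fin (Set.ncard I) := Finite.equivFinOfCardEq hcardeq
  set G' : RRGraph A := ⟨Set.ncard I, fun i a => (H.δ (e2.symm i).1 a).bind fun u' =>
    if h : u' ∈ I then some (e2 ⟨u', h⟩) else none⟩ with hG'
  have hG'pres : G'.presents X := by
    unfold RRGraph.presents
    rw [hHlangX]
    apply Set.Subset.antisymm
    · rintro y ⟨q, hq⟩
      have hqI : ∀ t, q t ∈ I := fun t => (hHsub _ _ _ (hq t)).2.1
      refine ⟨fun t => e2 ⟨q t, hqI t⟩, fun t => ?_⟩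
      show ((H.δ ((e2.symm (e2 ⟨q t, hqI t⟩)) : I).1 (y t)).bind fun u' =>
        if h : u' ∈ I then some (e2 ⟨u', h⟩) else none) = _
      rw [Equiv.symm_apply_apply]
      rw [hq t]
      rw [Option.bind_some]
      rw [dif_pos ((hHsub _ _ _ (hq t)).2.2)]
    · rintro y ⟨r, hr⟩
      refine ⟨fun t => (e2.symm (r t)).1, fun t => ?_⟩
      have hrt := hr t
      have hrt' : ((H.δ ((e2.symm (r t)) : I).1 (y t)).bind fun u' =>
          if h : u' ∈ I then some (e2 ⟨u', h⟩) else none) = some (r (t+1)) := hrt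
      obtain ⟨u', hu1, hu2⟩ := Option.bind_eq_some_iff.mp hrt'
      by_cases h : u' ∈ I
      · rw [dif_pos h] at hu2
        have heq : (⟨u', h⟩ : I) = e2.symm (r (t+1)) := by
          apply e2.injective
          rw [Equiv.apply_symm_apply]
          exact Option.some.inj hu2
        rw [hu1]
        congr 1
        exact congrArg Subtype.val heq
      · rw [dif_neg h] at hu2
        exact absurd hu2 (by simp)
  have hSm : G.S ≤ Set.ncard I := hmin G' hG'pres
  have hIuniv : I = Set.univ := by
    apply Set.eq_of_subset_of_ncard_le (Set.subset_univ I)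
    rw [Set.ncard_univ]
    simpa using hSm
  intro i j
  have hiI : i ∈ I := by rw [hIuniv]; trivial
  have hjI : j ∈ I := by rw [hIuniv]; trivial
  obtain ⟨s, -, hsπ⟩ := hiI 0
  obtain ⟨tt, htt, httπ⟩ := hjI (s + 1)
  refine ⟨tt - s, by omega, ?_⟩
  rw [adjpow_pos_iff]
  refine ⟨List.ofFn (fun r : Fin (tt - s) => ξ (((s + (r : ℕ) : ℕ)) : ℤ)),
    fun r => π ((s + r : ℕ) : ℤ), by simp, by simpa using hsπ, ?_, ?_⟩
  · beta_reduce
    have h2 : s + (tt - s) = tt := by omega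
    rw [h2]
    exact httπ
  · intro r hr
    simp only [List.length_ofFn] at hr
    have hg : (List.ofFn (fun r : Fin (tt - s) => ξ (((s + (r : ℕ) : ℕ)) : ℤ)))[r]'(by simpa using hr) =
        ξ ((s + r : ℕ) : ℤ) := by
      rw [List.getElem_ofFn]
    have hstep := hvalidN (s + r)
    have hassoc : s + r + 1 = s + (r + 1) := by omega
    rw [hassoc] at hstep
    beta_reduce
    rw [hg]
    exact hstep

/-- A sofic shift is irreducible iff its minimal right-resolving presentation is
irreducible (i.e. its adjacency matrix is an irreducible matrix). -/
theorem stmt5 {A : Type*} [Fintype A] (X : Set (ℤ → A)) (G : RRGraph A)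
    (hX : IsSofic X) (hG : IsMinRR G X) :
    IrreducibleShift X ↔ MatIrred G.adj := by
  obtain ⟨hpres, hess, hmin⟩ := hG
  rcases Set.eq_empty_or_nonempty X with hXe | hXne
  · have hS : G.S ≤ 0 := by
      refine hmin ⟨0, fun v => v.elim0⟩ ?_
      unfold RRGraph.presents RRGraph.lang
      rw [hXe]
      ext x
      simp only [Set.mem_empty_iff_false, Set.mem_setOf_eq, false_iff]
      rintro ⟨π, -⟩
      exact (π 0).elim0
    constructor
    · intro _ i j
      exact absurd i.isLt (by omega)
    · intro _ u v hu hv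
      obtain ⟨x, hx, -⟩ := hu
      rw [hXe] at hx
      exact absurd hx (Set.notMem_empty x)
  · constructor
    · intro h
      exact irreducible_to_matIrred hpres hmin hXne h
    · intro h
      exact matIrred_to_irreducible hpres h
end

section
/- Let X be an irreducible sofic shift with positive topological entropy, 𝒢 its minimal right-resolving presentation with S vertices, and for 2 ≤ j ≤ S let X̃_j be the sofic shift presented by the unsigned j-th subset graph 𝒢̃_j. If w is a synchronising word of X in 𝒢, then no point of X containing w lies in X̃_j; consequently X̃_j is a proper subshift of X. -/
open Filter Topology

/-- The vertex set of the `j`-th subset graph: `j`-element subsets of the vertices. -/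
def subsetVerts {A : Type*} (G : RRGraph A) (j : ℕ) : Type :=
  {s : Finset (Fin G.S) // s.card = j}

noncomputable instance {A : Type*} (G : RRGraph A) (j : ℕ) : Fintype (subsetVerts G j) := by
  unfold subsetVerts; infer_instance

instance {A : Type*} (G : RRGraph A) (j : ℕ) : DecidableEq (subsetVerts G j) := by
  unfold subsetVerts; infer_instance

/-- The transition of the unsigned subset graph: from the `j`-set `s` there is an
`a`-labelled edge to the set of `a`-successors of the vertices of `s`, provided these
are all defined and distinct. -/
def subsetStep {A : Type*} (G : RRGraph A) (j : ℕ) (s : subsetVerts G j) (a : A) :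
    Option (subsetVerts G j) :=
  let t := s.1.biUnion fun v => (G.δ v a).toFinset
  if h : (∀ v ∈ s.1, (G.δ v a).isSome) ∧ t.card = j then some ⟨t, h.2⟩ else none

/-- The unsigned `j`-th subset graph `𝒢̃_j` of `G` (with vertices renumbered by `Fin`). -/
noncomputable def subsetGraph {A : Type*} (G : RRGraph A) (j : ℕ) : RRGraph A where
  S := Fintype.card (subsetVerts G j)
  δ := fun u a =>
    (subsetStep G j ((Fintype.equivFin (subsetVerts G j)).symm u) a).map
      (Fintype.equivFin (subsetVerts G j))

/-- The signed subset matrix `A_j` of `G`.  The entry at `(U, W)` counts, with signs, the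
symbols `a` carrying all of `U = {v_1 < ⋯ < v_j}` bijectively onto `W`: the sign is `+1`
if `(v_1(a), …, v_j(a))` is an even permutation of the increasing ordering of `W` and
`-1` otherwise. -/
noncomputable def signedAdj {A : Type*} [Fintype A] (G : RRGraph A) (j : ℕ) :
    Matrix (subsetVerts G j) (subsetVerts G j) ℤ :=
  fun U W => ∑ a : A, ∑ σ : Equiv.Perm (Fin j),
    if ∀ i : Fin j,
        G.δ ((U.1.orderIsoOfFin U.2 i : Fin G.S)) a
          = some ((W.1.orderIsoOfFin W.2 (σ i) : Fin G.S))
    then ((Equiv.Perm.sign σ : ℤˣ) : ℤ) else 0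

section Aux

variable {A : Type*} {G : RRGraph A} {j : ℕ}

lemma subsetStep_eq {s t : subsetVerts G j} {a : A}
    (h : subsetStep G j s a = some t) :
    (∀ v ∈ s.1, (G.δ v a).isSome) ∧ t.1 = s.1.biUnion fun v => (G.δ v a).toFinset := by
  unfold subsetStep at h
  dsimp only at h
  split_ifs at h with hc
  exact ⟨hc.1, by rw [← Option.some_inj.mp h]⟩

lemma step_mem {s t : subsetVerts G j} {a : A}
    (h : subsetStep G j s a = some t) {v u : Fin G.S}
    (hv : v ∈ s.1) (hu : G.δ v a = some u) : u ∈ t.1 := by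
  rw [(subsetStep_eq h).2]
  exact Finset.mem_biUnion.mpr ⟨v, hv, by simp [hu]⟩

lemma step_some {s t : subsetVerts G j} {a : A}
    (h : subsetStep G j s a = some t) {v : Fin G.S} (hv : v ∈ s.1) :
    ∃ u, G.δ v a = some u ∧ u ∈ t.1 := by
  obtain ⟨hsome, -⟩ := subsetStep_eq h
  obtain ⟨u, hu⟩ := Option.isSome_iff_exists.mp (hsome v hv)
  exact ⟨u, hu, step_mem h hv hu⟩

lemma step_surj {s t : subsetVerts G j} {a : A}
    (h : subsetStep G j s a = some t) {u : Fin G.S} (hu : u ∈ t.1) :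
    ∃ v, v ∈ s.1 ∧ G.δ v a = some u := by
  rw [(subsetStep_eq h).2] at hu
  obtain ⟨v, hv, huv⟩ := Finset.mem_biUnion.mp hu
  exact ⟨v, hv, by simpa using huv⟩

lemma step_inj {s t : subsetVerts G j} {a : A}
    (h : subsetStep G j s a = some t) {v v' u : Fin G.S}
    (hv : v ∈ s.1) (hv' : v' ∈ s.1)
    (h1 : G.δ v a = some u) (h2 : G.δ v' a = some u) : v = v' := by
  obtain ⟨hsome, ht⟩ := subsetStep_eq h
  classical
  set f : Fin G.S → Fin G.S := fun v => (G.δ v a).getD v with hf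
  have himg : s.1.image f = t.1 := by
    rw [ht]
    ext u0
    simp only [Finset.mem_image, Finset.mem_biUnion, Option.mem_toFinset]
    constructor
    · rintro ⟨v0, hv0, rfl⟩
      obtain ⟨u1, hu1⟩ := Option.isSome_iff_exists.mp (hsome v0 hv0)
      exact ⟨v0, hv0, by simp [hf, hu1]⟩
    · rintro ⟨v0, hv0, hu0⟩
      exact ⟨v0, hv0, by simp only [Option.mem_def] at hu0; simp [hf, hu0]⟩
  have hcard : (s.1.image f).card = s.1.card := by rw [himg, t.2, s.2]
  have hinj : Set.InjOn f s.1 := Finset.card_image_iff.mp hcard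
  have e1 : f v = u := by simp [hf, h1]
  have e2 : f v' = u := by simp [hf, h2]
  exact hinj hv hv' (e1.trans e2.symm)

lemma run_cons (G : RRGraph A) (v : Fin G.S) (a : A) (l : List A) :
    G.run v (a :: l) = (G.δ v a).bind fun u => G.run u l := by
  have foldl_none : ∀ l' : List A,
      l'.foldl (fun o b => o.bind fun u => G.δ u b) none = none := by
    intro l'; induction l' with
    | nil => rfl
    | cons b l' ih => simpa using ih
  cases h : G.δ v a with
  | none => simpa [RRGraph.run, h] using foldl_none l
  | some u => simp [RRGraph.run, h]

lemma occursAt_cons_head {x : ℤ → A} {a : A} {l : List A} {k : ℤ}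
    (h : occursAt (a :: l) x k) : x k = a := by
  have := h ⟨0, by simp⟩
  simpa using this

lemma occursAt_cons_tail {x : ℤ → A} {a : A} {l : List A} {k : ℤ}
    (h : occursAt (a :: l) x k) : occursAt l x (k + 1) := by
  intro i
  have := h ⟨i + 1, by simp [Nat.succ_lt_succ i.2]⟩
  simp only [List.get] at this ⊢
  convert this using 2
  push_cast; ring

lemma run_lem {x : ℤ → A} {s : ℤ → subsetVerts G j}
    (hstep : ∀ k : ℤ, subsetStep G j (s k) (x k) = some (s (k + 1))) :
    ∀ (w : List A) (k : ℤ), occursAt w x k → ∀ v ∈ (s k).1,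
      ∃ u, G.run v w = some u ∧ u ∈ (s (k + w.length)).1 := by
  intro w
  induction w with
  | nil => intro k _ v hv; exact ⟨v, rfl, by simpa using hv⟩
  | cons a l ih =>
    intro k hocc v hv
    have hxa : x k = a := occursAt_cons_head hocc
    have hst := hstep k
    rw [hxa] at hst
    obtain ⟨u1, hu1, hu1m⟩ := step_some hst hv
    obtain ⟨u, hu, hum⟩ := ih (k + 1) (occursAt_cons_tail hocc) u1 hu1m
    refine ⟨u, by rw [run_cons, hu1]; exact hu, ?_⟩
    have harith : k + ((a :: l).length : ℤ) = k + 1 + l.length := by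
      rw [List.length_cons]; push_cast; ring
    rwa [harith]

lemma run_inj_lem {x : ℤ → A} {s : ℤ → subsetVerts G j}
    (hstep : ∀ k : ℤ, subsetStep G j (s k) (x k) = some (s (k + 1))) :
    ∀ (w : List A) (k : ℤ), occursAt w x k → ∀ v ∈ (s k).1, ∀ v' ∈ (s k).1,
      ∀ u, G.run v w = some u → G.run v' w = some u → v = v' := by
  intro w
  induction w with
  | nil =>
    intro k _ v _ v' _ u h1 h2
    simp only [RRGraph.run, List.foldl_nil, Option.some_inj] at h1 h2
    rw [h1, h2]
  | cons a l ih =>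
    intro k hocc v hv v' hv' u h1 h2
    have hxa : x k = a := occursAt_cons_head hocc
    have hst := hstep k
    rw [hxa] at hst
    rw [run_cons] at h1 h2
    cases hd : G.δ v a with
    | none => rw [hd] at h1; simp at h1
    | some u1 =>
      cases hd' : G.δ v' a with
      | none => rw [hd'] at h2; simp at h2
      | some u1' =>
        rw [hd] at h1; rw [hd'] at h2
        simp only [Option.bind_some] at h1 h2
        have hm1 : u1 ∈ (s (k + 1)).1 := step_mem hst hv hd
        have hm1' : u1' ∈ (s (k + 1)).1 := step_mem hst hv' hd'
        have : u1 = u1' := ih (k + 1) (occursAt_cons_tail hocc) u1 hm1 u1' hm1' u h1 h2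
        exact step_inj hst hv hv' hd (this ▸ hd')

lemma mem_shift {α : Type*} {s : ℤ → Finset α} {v : α} {k k' : ℤ}
    (e : k = k') (h : v ∈ s k) : v ∈ s k' := e ▸ h

/-- Forward path through a subset-graph path, by choice. -/
noncomputable def fwdPath (G : RRGraph A) (s : ℤ → Finset (Fin G.S)) (x : ℤ → A)
    (hfwd : ∀ (k : ℤ), ∀ v ∈ s k, ∃ u, G.δ v (x k) = some u ∧ u ∈ s (k + 1))
    (v0 : Fin G.S) (hv0 : v0 ∈ s 0) : ∀ n : ℕ, {v : Fin G.S // v ∈ s (n : ℤ)}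
  | 0 => ⟨v0, hv0⟩
  | n + 1 =>
    ⟨(hfwd n (fwdPath G s x hfwd v0 hv0 n).1 (fwdPath G s x hfwd v0 hv0 n).2).choose, by
      have := (hfwd n (fwdPath G s x hfwd v0 hv0 n).1
        (fwdPath G s x hfwd v0 hv0 n).2).choose_spec.2
      exact mem_shift (by push_cast; ring) this⟩

lemma fwdPath_spec (G : RRGraph A) (s : ℤ → Finset (Fin G.S)) (x : ℤ → A)
    (hfwd : ∀ (k : ℤ), ∀ v ∈ s k, ∃ u, G.δ v (x k) = some u ∧ u ∈ s (k + 1))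
    (v0 : Fin G.S) (hv0 : v0 ∈ s 0) (n : ℕ) :
    G.δ (fwdPath G s x hfwd v0 hv0 n).1 (x n) = some (fwdPath G s x hfwd v0 hv0 (n + 1)).1 :=
  (hfwd n (fwdPath G s x hfwd v0 hv0 n).1 (fwdPath G s x hfwd v0 hv0 n).2).choose_spec.1

/-- Backward path through a subset-graph path, by choice. -/
noncomputable def bwdPath (G : RRGraph A) (s : ℤ → Finset (Fin G.S)) (x : ℤ → A)
    (hbwd : ∀ (k : ℤ), ∀ u ∈ s (k + 1), ∃ v, v ∈ s k ∧ G.δ v (x k) = some u)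
    (v0 : Fin G.S) (hv0 : v0 ∈ s 0) : ∀ n : ℕ, {v : Fin G.S // v ∈ s (-(n : ℤ))}
  | 0 => ⟨v0, by simpa using hv0⟩
  | n + 1 =>
    ⟨(hbwd (-((n : ℤ) + 1)) (bwdPath G s x hbwd v0 hv0 n).1 (by
        exact mem_shift (by ring) (bwdPath G s x hbwd v0 hv0 n).2)).choose, by
      have := (hbwd (-((n : ℤ) + 1)) (bwdPath G s x hbwd v0 hv0 n).1 (by
        exact mem_shift (by ring) (bwdPath G s x hbwd v0 hv0 n).2)).choose_spec.1
      exact mem_shift (by push_cast; ring) this⟩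

lemma bwdPath_spec (G : RRGraph A) (s : ℤ → Finset (Fin G.S)) (x : ℤ → A)
    (hbwd : ∀ (k : ℤ), ∀ u ∈ s (k + 1), ∃ v, v ∈ s k ∧ G.δ v (x k) = some u)
    (v0 : Fin G.S) (hv0 : v0 ∈ s 0) (n : ℕ) :
    G.δ (bwdPath G s x hbwd v0 hv0 (n + 1)).1 (x (-((n : ℤ) + 1)))
      = some (bwdPath G s x hbwd v0 hv0 n).1 :=
  (hbwd (-((n : ℤ) + 1)) (bwdPath G s x hbwd v0 hv0 n).1 (by
        exact mem_shift (by ring) (bwdPath G s x hbwd v0 hv0 n).2)).choose_spec.2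

lemma subsetGraph_path {x : ℤ → A} (hx : x ∈ (subsetGraph G j).lang) :
    ∃ s : ℤ → subsetVerts G j, ∀ k : ℤ, subsetStep G j (s k) (x k) = some (s (k + 1)) := by
  obtain ⟨π, hπ⟩ := hx
  refine ⟨fun k => (Fintype.equivFin (subsetVerts G j)).symm (π k), fun k => ?_⟩
  have := hπ k
  replace this := Option.map_eq_some_iff.mp this
  obtain ⟨y, hy, hey⟩ := this
  show subsetStep G j ((Fintype.equivFin (subsetVerts G j)).symm (π k)) (x k)
    = some ((Fintype.equivFin (subsetVerts G j)).symm (π (k + 1)))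
  rw [hy]
  exact congrArg some ((Equiv.eq_symm_apply _).mpr hey)

end Aux

/-- If `w` is a synchronising word of `X` in its minimal right-resolving presentation
`G`, then no point of `X` containing `w` lies in the sofic shift presented by the
unsigned `j`-th subset graph (`2 ≤ j ≤ S`); consequently the latter is a proper
subshift of `X`. -/
theorem stmt7 {A : Type*} [Fintype A] (X : Set (ℤ → A)) (G : RRGraph A)
    (hX : IsSofic X) (hirr : IrreducibleShift X) (hG : IsMinRR G X)
    (h : ℝ) (hEnt : HasEntropy X h) (hpos : 0 < h)
    (j : ℕ) (hj2 : 2 ≤ j) (hjS : j ≤ G.S)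
    (w : List A) (hw : isWordOf X w) (hsync : G.Synchronising w) :
    (∀ x ∈ X, (∃ k : ℤ, occursAt w x k) → x ∉ (subsetGraph G j).lang) ∧
      (subsetGraph G j).lang ⊂ X := by
  have part1 : ∀ x ∈ X, (∃ k : ℤ, occursAt w x k) → x ∉ (subsetGraph G j).lang := by
    rintro x hx ⟨k, hocc⟩ hlang
    obtain ⟨s, hstep⟩ := subsetGraph_path hlang
    -- two distinct vertices in s k
    have hcard : 1 < (s k).1.card := by rw [(s k).2]; omega
    obtain ⟨v, hv, v', hv', hvv'⟩ := Finset.one_lt_card.mp hcard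
    obtain ⟨u, hu, hum⟩ := run_lem hstep w k hocc v hv
    obtain ⟨u', hu', hum'⟩ := run_lem hstep w k hocc v' hv'
    obtain ⟨t, ht⟩ := hsync
    have e1 : u = t := ht v u hu
    have e2 : u' = t := ht v' u' hu'
    exact hvv' (run_inj_lem hstep w k hocc v hv v' hv' t (e1 ▸ hu) (e2 ▸ hu'))
  refine ⟨part1, ?_⟩
  have hsub : (subsetGraph G j).lang ⊆ X := by
    intro x hx
    obtain ⟨s, hstep⟩ := subsetGraph_path hx
    rw [hG.1]
    -- build a bi-infinite path in G
    have hfwd : ∀ (k : ℤ), ∀ v ∈ (s k).1, ∃ u, G.δ v (x k) = some u ∧ u ∈ (s (k + 1)).1 :=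
      fun k v hv => step_some (hstep k) hv
    have hbwd : ∀ (k : ℤ), ∀ u ∈ (s (k + 1)).1, ∃ v, v ∈ (s k).1 ∧ G.δ v (x k) = some u :=
      fun k u hu => step_surj (hstep k) hu
    have hne : (s 0).1.Nonempty := by
      rw [← Finset.card_pos, (s 0).2]; omega
    obtain ⟨v0, hv0⟩ := hne
    set s' : ℤ → Finset (Fin G.S) := fun k => (s k).1 with hs'
    set F := fwdPath G s' x hfwd v0 hv0 with hF
    set B := bwdPath G s' x hbwd v0 hv0 with hB
    refine ⟨fun k => if 0 ≤ k then (F k.toNat).1 else (B (-k).toNat).1, fun k => ?_⟩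
    rcases le_or_gt 0 k with hk | hk
    · have hk1 : (0 : ℤ) ≤ k + 1 := by omega
      simp only [hk, hk1, if_true]
      have e : (k + 1).toNat = k.toNat + 1 := by omega
      rw [e]
      have := fwdPath_spec G s' x hfwd v0 hv0 k.toNat
      have ex : x (k.toNat : ℤ) = x k := by rw [Int.toNat_of_nonneg hk]
      rwa [ex] at this
    · have hknot : ¬ (0 : ℤ) ≤ k := by omega
      simp only [hknot, if_false]
      set n : ℕ := (-(k + 1)).toNat with hn
      have hkeq : k = -((n : ℤ) + 1) := by
        have : (n : ℤ) = -(k + 1) := Int.toNat_of_nonneg (by omega)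
        omega
      have hnk : (-k).toNat = n + 1 := by omega
      rw [hnk]
      have hspec := bwdPath_spec G s' x hbwd v0 hv0 n
      have ex : x (-((n : ℤ) + 1)) = x k := by rw [hkeq]
      rw [ex] at hspec
      rcases Nat.eq_zero_or_pos n with hn0 | hnpos
      · have hk10 : k + 1 = 0 := by omega
        rw [hk10]
        simp only [le_refl, if_true, Int.toNat_zero]
        have hFB : (F 0).1 = (B n).1 := by rw [hn0]; rfl
        rw [hFB]
        exact hspec
      · have hk1not : ¬ (0 : ℤ) ≤ k + 1 := by omega
        simp only [hk1not, if_false]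
        exact hspec
  refine ⟨hsub, fun hXsub => ?_⟩
  obtain ⟨x, hxX, k, hocc⟩ := hw
  exact part1 x hxX ⟨k, hocc⟩ (hXsub hxX)
end
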